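/- Let G be a q-pyramid DAG of height b. Then the pebbling number of G satisfies p(G) ≥ (q−1)(b−1). -/

import Mathlib

universe u

variable {V : Type u}

/-- One move of the (one-color) pebble game: place a pebble on a vertex all of whose
immediate predecessors carry pebbles, or remove a pebble. -/
def PebbleStep [DecidableEq V] (E : V → V → Prop) (s t : Finset V) : Prop :=
  (∃ v, v ∉ s ∧ (∀ u, E u v → u ∈ s) ∧ t = insert v s) ∨ (∃ v ∈ s, t = s.erase v)

/-- A complete pebbling schedule, given by its list of configurations, starting from
no pebbles, in which every vertex is pebbled at least once. -/
def IsPebbling [DecidableEq V] (E : V → V → Prop) (φ : List (Finset V)) : Prop :=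
  φ.head? = some (∅ : Finset V) ∧ List.Chain' (PebbleStep E) φ ∧ ∀ v : V, ∃ s ∈ φ, v ∈ s

/-- Maximum number of pebbles simultaneously on the DAG. -/
def maxPebbles [DecidableEq V] (φ : List (Finset V)) : ℕ :=
  (φ.map Finset.card).foldr max 0

/-- The pebbling number of a DAG. -/
noncomputable def pebblingNumber [DecidableEq V] (E : V → V → Prop) : ℕ :=
  sInf {m | ∃ φ : List (Finset V), IsPebbling E φ ∧ maxPebbles φ ≤ m}

/-- Vertices of the `q`-pyramid DAG of height `b`: `v_{i,j}` for `1 ≤ i ≤ b`,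
`1 ≤ j ≤ (q-1)(b-i)+1`. -/
abbrev PyrV (q b : ℕ) : Type :=
  {p : ℕ × ℕ // 1 ≤ p.1 ∧ p.1 ≤ b ∧ 1 ≤ p.2 ∧ p.2 ≤ (q - 1) * (b - p.1) + 1}

/-- Edges of the `q`-pyramid DAG of height `b`: the immediate predecessors of `v_{i,j}`
are `v_{i-1,j}, …, v_{i-1,j+q-1}`. -/
def PyrE (q b : ℕ) (u v : PyrV q b) : Prop :=
  v.1.1 = u.1.1 + 1 ∧ v.1.2 ≤ u.1.2 ∧ u.1.2 ≤ v.1.2 + (q - 1)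

namespace Stmt5Aux

/-- A weak step: either nothing changes, or a pebble move. -/
def WeakStep [DecidableEq V] (E : V → V → Prop) (s t : Finset V) : Prop :=
  t = s ∨ PebbleStep E s t

theorem placed_preds [DecidableEq V] {E : V → V → Prop} {s t : Finset V}
    (h : WeakStep E s t) {v : V} (hv : v ∈ t) (hv' : v ∉ s) :
    ∀ u, E u v → u ∈ s := by
  rcases h with rfl | h
  · exact absurd hv hv'
  rcases h with ⟨w, hw, hpre, rfl⟩ | ⟨w, hw, rfl⟩
  · rcases Finset.mem_insert.1 hv with rfl | hv2
    · exact hpre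
    · exact absurd hv2 hv'
  · exact absurd (Finset.mem_of_mem_erase hv) hv'

theorem placed_unique [DecidableEq V] {E : V → V → Prop} {s t : Finset V}
    (h : WeakStep E s t) {v w : V} (hv : v ∈ t) (hv' : v ∉ s) (hw : w ∈ t) (hw' : w ∉ s) :
    v = w := by
  rcases h with rfl | h
  · exact absurd hv hv'
  rcases h with ⟨z, hz, hpre, rfl⟩ | ⟨z, hz, rfl⟩
  · rcases Finset.mem_insert.1 hv with rfl | hv2
    · rcases Finset.mem_insert.1 hw with rfl | hw2
      · rfl
      · exact absurd hw2 hw'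
    · exact absurd hv2 hv'
  · exact absurd (Finset.mem_of_mem_erase hv) hv'

theorem mem_foldr_le {l : List ℕ} {a : ℕ} (h : a ∈ l) : a ≤ l.foldr max 0 := by
  induction l with
  | nil => simp at h
  | cons x xs ih =>
    rcases List.mem_cons.1 h with rfl | h2
    · exact le_max_left _ _
    · exact le_trans (ih h2) (le_max_right _ _)

theorem card_le_maxPebbles [DecidableEq V] {φ : List (Finset V)} {s : Finset V}
    (h : s ∈ φ) : s.card ≤ maxPebbles φ :=
  mem_foldr_le (List.mem_map.2 ⟨s, h, rfl⟩)



/-- The configuration-at-time function obtained from a pebbling list. -/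
def cfg [DecidableEq V] (φ : List (Finset V)) (t : ℕ) : Finset V :=
  φ.getD (min t (φ.length - 1)) ∅

theorem cfg_eq_get [DecidableEq V] (φ : List (Finset V)) (hne : φ ≠ []) (t : ℕ)
    (h : t < φ.length) : cfg φ t = φ.get ⟨t, h⟩ := by
  have hmin : min t (φ.length - 1) = t := by omega
  rw [cfg, hmin]
  simp [List.getD_eq_getElem?_getD, List.getElem?_eq_getElem h]

theorem cfg_zero [DecidableEq V] {E : V → V → Prop} {φ : List (Finset V)}
    (h : IsPebbling E φ) : cfg φ 0 = ∅ := by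
  rcases φ with - | ⟨s, l⟩
  · simp [IsPebbling] at h
  · have : s = ∅ := by simpa using h.1
    subst this
    rw [cfg_eq_get _ (by simp) 0 (by simp)]
    rfl

theorem cfg_mem [DecidableEq V] {φ : List (Finset V)} (hne : φ ≠ []) (t : ℕ) :
    cfg φ t ∈ φ := by
  have hlen : 0 < φ.length := List.length_pos_iff.2 hne
  have h : min t (φ.length - 1) < φ.length := by omega
  rw [cfg]
  simp only [List.getD_eq_getElem?_getD, List.getElem?_eq_getElem h]
  exact List.getElem_mem h

theorem cfg_step [DecidableEq V] {E : V → V → Prop} {φ : List (Finset V)}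
    (h : List.Chain' (PebbleStep E) φ) (hne : φ ≠ []) (t : ℕ) :
    WeakStep E (cfg φ t) (cfg φ (t+1)) := by
  have hlen : 0 < φ.length := List.length_pos_iff.2 hne
  by_cases ht : t + 1 < φ.length
  · have ht' : t < φ.length := by omega
    rw [cfg_eq_get _ hne t ht', cfg_eq_get _ hne (t+1) ht]
    exact Or.inr (List.isChain_iff_getElem.1 h t (by omega))
  · have h1 : min t (φ.length - 1) = φ.length - 1 := by omega
    have h2 : min (t+1) (φ.length - 1) = φ.length - 1 := by omega
    exact Or.inl (by rw [cfg, cfg, h1, h2])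

theorem cfg_complete [DecidableEq V] {φ : List (Finset V)} {v : V} {s : Finset V}
    (hs : s ∈ φ) (hv : v ∈ s) : ∃ t, v ∈ cfg φ t := by
  obtain ⟨i, hi, rfl⟩ := List.getElem_of_mem hs
  refine ⟨i, ?_⟩
  rw [cfg_eq_get _ (List.ne_nil_of_mem hs) i hi]
  simpa using hv

theorem cfg_card [DecidableEq V] {φ : List (Finset V)} (hne : φ ≠ []) (t : ℕ) :
    (cfg φ t).card ≤ maxPebbles φ := by
  have : (cfg φ t).card ∈ φ.map Finset.card := List.mem_map.2 ⟨_, cfg_mem hne t, rfl⟩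
  -- foldr max bound
  have aux : ∀ (l : List ℕ) (a : ℕ), a ∈ l → a ≤ l.foldr max 0 := by
    intro l
    induction l with
    | nil => intro a ha; simp at ha
    | cons x xs ih =>
      intro a ha
      rcases List.mem_cons.1 ha with rfl | h2
      · exact le_max_left _ _
      · exact le_trans (ih a h2) (le_max_right _ _)
  exact aux _ _ this



variable {q b : ℕ}

/-- Strict path of slope `σ` below `p`. -/
def SPath (σ : ℕ) (p w : PyrV q b) : Prop :=
  ∃ d, 1 ≤ d ∧ w.1.1 + d = p.1.1 ∧ w.1.2 = p.1.2 + σ * d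

/-- The strict sub-cone below `p`. -/
def Below (p w : PyrV q b) : Prop :=
  ∃ d, 1 ≤ d ∧ w.1.1 + d = p.1.1 ∧ p.1.2 ≤ w.1.2 ∧ w.1.2 ≤ p.1.2 + (q - 1) * d

section Sched
variable (c : ℕ → Finset (PyrV q b))

open Classical in
/-- Latest time `≤ T` at which the strict `σ`-path below `p` is pebble-free. -/
noncomputable def rho (σ : ℕ) (p : PyrV q b) (T : ℕ) : ℕ :=
  Nat.findGreatest (fun t => ∀ w ∈ c t, ¬ SPath σ p w) T

open Classical in
/-- Latest time `≤ T` at which `p` carries no pebble. -/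
noncomputable def rst (p : PyrV q b) (T : ℕ) : ℕ :=
  Nat.findGreatest (fun t => p ∉ c t) T

theorem rho_le (σ : ℕ) (p : PyrV q b) (T : ℕ) : rho c σ p T ≤ T := by
  classical
  unfold rho; exact Nat.findGreatest_le T

theorem rho_spec (hc0 : c 0 = ∅) (σ : ℕ) (p : PyrV q b) (T : ℕ) :
    ∀ w ∈ c (rho c σ p T), ¬ SPath σ p w := by
  classical
  unfold rho
  exact Nat.findGreatest_spec (P := fun t => ∀ w ∈ c t, ¬ SPath σ p w) (Nat.zero_le T)
    (by simp [hc0])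

theorem le_rho {σ : ℕ} {p : PyrV q b} {T t : ℕ} (h2 : t ≤ T)
    (h : ∀ w ∈ c t, ¬ SPath σ p w) : t ≤ rho c σ p T := by
  classical
  unfold rho
  exact Nat.le_findGreatest h2 h

theorem rho_occ (σ : ℕ) (p : PyrV q b) (T t : ℕ) (h1 : rho c σ p T < t) (h2 : t ≤ T) :
    ∃ w ∈ c t, SPath σ p w := by
  by_contra hcon
  push_neg at hcon
  exact absurd (le_rho c h2 hcon) (Nat.not_le.2 h1)

theorem rst_le (p : PyrV q b) (T : ℕ) : rst c p T ≤ T := by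
  classical
  unfold rst; exact Nat.findGreatest_le T

theorem rst_spec (hc0 : c 0 = ∅) (p : PyrV q b) (T : ℕ) : p ∉ c (rst c p T) := by
  classical
  unfold rst
  exact Nat.findGreatest_spec (P := fun t => p ∉ c t) (Nat.zero_le T) (by simp [hc0])

theorem le_rst {p : PyrV q b} {T t : ℕ} (h2 : t ≤ T) (h : p ∉ c t) : t ≤ rst c p T := by
  classical
  unfold rst
  exact Nat.le_findGreatest h2 h

theorem rst_mem (p : PyrV q b) (T t : ℕ) (h1 : rst c p T < t) (h2 : t ≤ T) : p ∈ c t := by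
  by_contra hcon
  exact absurd (le_rst c h2 hcon) (Nat.not_le.2 h1)

theorem rst_lt (hc0 : c 0 = ∅) {p : PyrV q b} {T : ℕ} (hp : p ∈ c T) : rst c p T < T := by
  rcases Nat.lt_or_ge (rst c p T) T with h | h
  · exact h
  · have heq : rst c p T = T := le_antisymm (rst_le c p T) h
    exact absurd (heq ▸ rst_spec c hc0 p T) (by simpa using hp)

theorem rst_placed (hc0 : c 0 = ∅) {p : PyrV q b} {T : ℕ} (hp : p ∈ c T) :
    p ∉ c (rst c p T) ∧ p ∈ c (rst c p T + 1) :=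
  ⟨rst_spec c hc0 p T, rst_mem c p T _ (Nat.lt_succ_self _) (rst_lt c hc0 hp)⟩

end Sched


variable {q b : ℕ}



/-- The `k`-th immediate predecessor of `v` (with clamped offset). -/
def pk (v : PyrV q b) (hv2 : 2 ≤ v.1.1) (k : ℕ) : PyrV q b :=
  ⟨(v.1.1 - 1, v.1.2 + min k (q - 1)), by
    obtain ⟨h1, h2, h3, h4⟩ := v.2
    have hsplit : b - (v.1.1 - 1) = (b - v.1.1) + 1 := by omega
    have hmul : (q - 1) * (b - (v.1.1 - 1)) = (q - 1) * (b - v.1.1) + (q - 1) := by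
      rw [hsplit, Nat.mul_succ]
    have hmin : min k (q - 1) ≤ q - 1 := min_le_right _ _
    dsimp only
    exact ⟨by omega, by omega, by omega, by omega⟩⟩

theorem pk_lvl (v : PyrV q b) (hv2 : 2 ≤ v.1.1) (k : ℕ) : (pk v hv2 k).1.1 = v.1.1 - 1 := rfl

theorem pk_col {k : ℕ} (v : PyrV q b) (hv2 : 2 ≤ v.1.1) (hk : k ≤ q - 1) :
    (pk v hv2 k).1.2 = v.1.2 + k := by
  show v.1.2 + min k (q - 1) = v.1.2 + k
  rw [min_eq_left hk]

theorem pk_edge (v : PyrV q b) (hv2 : 2 ≤ v.1.1) (k : ℕ) : PyrE q b (pk v hv2 k) v := by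
  refine ⟨?_, ?_, ?_⟩
  · show v.1.1 = v.1.1 - 1 + 1; omega
  · show v.1.2 ≤ v.1.2 + min k (q - 1); omega
  · show v.1.2 + min k (q - 1) ≤ v.1.2 + (q - 1)
    have := min_le_right k (q - 1); omega

theorem spath_pk_zero (v : PyrV q b) (hv2 : 2 ≤ v.1.1) : SPath 0 v (pk v hv2 0) := by
  refine ⟨1, le_refl _, ?_, ?_⟩
  · show v.1.1 - 1 + 1 = v.1.1; omega
  · show v.1.2 + min 0 (q - 1) = v.1.2 + 0 * 1; simp

theorem spath_pk_right (v : PyrV q b) (hv2 : 2 ≤ v.1.1) :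
    SPath (q - 1) v (pk v hv2 (q - 1)) := by
  refine ⟨1, le_refl _, ?_, ?_⟩
  · show v.1.1 - 1 + 1 = v.1.1; omega
  · show v.1.2 + min (q - 1) (q - 1) = v.1.2 + (q - 1) * 1; simp

theorem spath_trans_zero (v : PyrV q b) (hv2 : 2 ≤ v.1.1) {w : PyrV q b}
    (h : SPath 0 (pk v hv2 0) w) : SPath 0 v w := by
  obtain ⟨d, hd, hl, hc⟩ := h
  rw [pk_lvl] at hl
  rw [pk_col v hv2 (Nat.zero_le _)] at hc
  exact ⟨d + 1, by omega, by omega, by simpa using hc⟩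

theorem spath_trans_right (v : PyrV q b) (hv2 : 2 ≤ v.1.1) {w : PyrV q b}
    (h : SPath (q - 1) (pk v hv2 (q - 1)) w) : SPath (q - 1) v w := by
  obtain ⟨d, hd, hl, hc⟩ := h
  rw [pk_lvl] at hl
  rw [pk_col v hv2 (le_refl _)] at hc
  refine ⟨d + 1, by omega, by omega, ?_⟩
  have hmul : (q - 1) * (d + 1) = (q - 1) * d + (q - 1) := Nat.mul_succ _ _
  omega

/-- The second predecessor straight below, for the left-edge argument. -/
theorem spath_deep_zero (v : PyrV q b) (hv3 : 3 ≤ v.1.1) (hv2 : 2 ≤ v.1.1)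
    (h2 : 2 ≤ (pk v hv2 0).1.1) : SPath 0 v (pk (pk v hv2 0) h2 0) := by
  refine ⟨2, by omega, ?_, ?_⟩
  · rw [pk_lvl, pk_lvl]; omega
  · have e1 := pk_col (pk v hv2 0) h2 (Nat.zero_le (q - 1))
    have e2 := pk_col v hv2 (Nat.zero_le (q - 1))
    omega

theorem spath_deep_right (v : PyrV q b) (hv3 : 3 ≤ v.1.1) (hv2 : 2 ≤ v.1.1)
    (h2 : 2 ≤ (pk v hv2 (q - 1)).1.1) :
    SPath (q - 1) v (pk (pk v hv2 (q - 1)) h2 (q - 1)) := by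
  refine ⟨2, by omega, ?_, ?_⟩
  · rw [pk_lvl, pk_lvl]; omega
  · have e1 := pk_col (pk v hv2 (q - 1)) h2 (le_refl _)
    have e2 := pk_col v hv2 (le_refl (q - 1))
    have hmul : (q - 1) * 2 = (q - 1) + (q - 1) := by omega
    omega

/-- Predecessors and anything on their paths lie strictly below `v`. -/
theorem below_pk (v : PyrV q b) (hv2 : 2 ≤ v.1.1) {k : ℕ} (hk : k ≤ q - 1) :
    Below v (pk v hv2 k) := by
  refine ⟨1, le_refl _, ?_, ?_, ?_⟩
  · show v.1.1 - 1 + 1 = v.1.1; omega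
  · rw [pk_col v hv2 hk]; omega
  · rw [pk_col v hv2 hk]; omega

theorem below_sib (v : PyrV q b) (hv2 : 2 ≤ v.1.1) {k σ : ℕ} (hk : k ≤ q - 1)
    (hσ : σ = 0 ∨ σ = q - 1) {w : PyrV q b} (h : SPath σ (pk v hv2 k) w) : Below v w := by
  obtain ⟨d, hd, hl, hc⟩ := h
  rw [pk_lvl] at hl
  rw [pk_col v hv2 hk] at hc
  refine ⟨d + 1, by omega, by omega, ?_, ?_⟩
  · omega
  · have hmul : (q - 1) * (d + 1) = (q - 1) * d + (q - 1) := Nat.mul_succ _ _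
    have hσd : σ * d ≤ (q - 1) * d := Nat.mul_le_mul_right d (by rcases hσ with rfl | rfl <;> omega)
    omega

/-- Transitivity of the sub-cone along a predecessor. -/
theorem below_trans_pk (v : PyrV q b) (hv2 : 2 ≤ v.1.1) {k : ℕ} (hk : k ≤ q - 1)
    {w : PyrV q b} (h : Below (pk v hv2 k) w) : Below v w := by
  obtain ⟨d, hd, hl, hc1, hc2⟩ := h
  rw [pk_lvl] at hl
  rw [pk_col v hv2 hk] at hc1 hc2
  refine ⟨d + 1, by omega, by omega, by omega, ?_⟩
  have hmul : (q - 1) * (d + 1) = (q - 1) * d + (q - 1) := Nat.mul_succ _ _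
  omega

/-- A sibling-path vertex is not in the dive sub-cone. -/
theorem sib_not_below (v : PyrV q b) (hv2 : 2 ≤ v.1.1) {k ks : ℕ} (hk : k ≤ q - 1)
    (hks : ks ≤ q - 1) (hne : k ≠ ks) {w : PyrV q b}
    (h : w = pk v hv2 k ∨ SPath (if k < ks then 0 else q - 1) (pk v hv2 k) w)
    (hb : Below (pk v hv2 ks) w) : False := by
  obtain ⟨d, hd, hl, hc1, hc2⟩ := hb
  rw [pk_lvl] at hl
  rw [pk_col v hv2 hks] at hc1 hc2
  rcases h with rfl | ⟨e, he, hel, hec⟩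
  · rw [pk_lvl] at hl; omega
  · rw [pk_lvl] at hel
    rw [pk_col v hv2 hk] at hec
    have hde : d = e := by omega
    subst hde
    by_cases hlt : k < ks
    · rw [if_pos hlt] at hec; simp at hec; omega
    · rw [if_neg hlt] at hec; omega

/-- Distinct sibling paths are disjoint. -/
theorem sib_disjoint (v : PyrV q b) (hv2 : 2 ≤ v.1.1) {k l ks : ℕ} (hk : k ≤ q - 1)
    (hl : l ≤ q - 1) (hkl : k ≠ l) (hq : 2 ≤ q) {w : PyrV q b}
    (h1 : w = pk v hv2 k ∨ SPath (if k < ks then 0 else q - 1) (pk v hv2 k) w)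
    (h2 : w = pk v hv2 l ∨ SPath (if l < ks then 0 else q - 1) (pk v hv2 l) w) : False := by
  rcases h1 with rfl | ⟨d, hd, hdl, hdc⟩
  · rcases h2 with heq | ⟨e, he, hel, hec⟩
    · apply hkl
      have := congrArg (fun z : PyrV q b => z.1.2) heq
      simp only [pk_col v hv2 hk, pk_col v hv2 hl] at this
      omega
    · have e1 : (pk v hv2 k).1.1 = v.1.1 - 1 := rfl
      have e2 : (pk v hv2 l).1.1 = v.1.1 - 1 := rfl
      omega
  · rcases h2 with rfl | ⟨e, he, hel, hec⟩
    · have e1 : (pk v hv2 k).1.1 = v.1.1 - 1 := rfl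
      have e2 : (pk v hv2 l).1.1 = v.1.1 - 1 := rfl
      omega
    · rw [pk_lvl] at hdl hel
      rw [pk_col v hv2 hk] at hdc
      rw [pk_col v hv2 hl] at hec
      have hde : d = e := by omega
      subst hde
      have hrd : 1 ≤ (q - 1) * d := by
        have := Nat.mul_le_mul (show 1 ≤ q - 1 by omega) hd
        simpa using this
      by_cases hklt : k < ks <;> by_cases hllt : l < ks
      · rw [if_pos hklt] at hdc; rw [if_pos hllt] at hec; simp at hdc hec; omega
      · rw [if_pos hklt] at hdc; rw [if_neg hllt] at hec; simp at hdc; omega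
      · rw [if_neg hklt] at hdc; rw [if_pos hllt] at hec; simp at hec; omega
      · rw [if_neg hklt] at hdc; rw [if_neg hllt] at hec; omega


section MainLemma
variable {q b : ℕ}

theorem edge_left (c : ℕ → Finset (PyrV q b)) (hc0 : c 0 = ∅)
    (hstep : ∀ t, WeakStep (PyrE q b) (c t) (c (t + 1)))
    (v : PyrV q b) (hv3 : 3 ≤ v.1.1) (hv2 : 2 ≤ v.1.1) (T : ℕ)
    (h1 : v ∉ c T) (h2 : v ∈ c (T + 1)) :
    rho c 0 v T ≤ rho c 0 (pk v hv2 0) (rst c (pk v hv2 0) T) := by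
  have hp0T : pk v hv2 0 ∈ c T := placed_preds (hstep T) h2 h1 _ (pk_edge v hv2 0)
  have hplaced := rst_placed c hc0 hp0T
  have hpreds0 := placed_preds (hstep (rst c (pk v hv2 0) T)) hplaced.2 hplaced.1
  have hemp := rho_spec c hc0 0 v T
  have hle : rho c 0 v T ≤ rst c (pk v hv2 0) T := by
    apply le_rst c (rho_le c 0 v T)
    intro hmem
    exact hemp _ hmem (spath_pk_zero v hv2)
  have hp0lvl : 2 ≤ (pk v hv2 0).1.1 := by
    have h : (pk v hv2 0).1.1 = v.1.1 - 1 := rfl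
    omega
  have hne : rho c 0 v T ≠ rst c (pk v hv2 0) T := by
    intro heq
    have hw0 : pk (pk v hv2 0) hp0lvl 0 ∈ c (rst c (pk v hv2 0) T) :=
      hpreds0 _ (pk_edge (pk v hv2 0) hp0lvl 0)
    rw [← heq] at hw0
    exact hemp _ hw0 (spath_deep_zero v hv3 hv2 hp0lvl)
  apply le_rho c (le_of_lt (lt_of_le_of_ne hle hne))
  intro w hw hsp
  exact hemp w hw (spath_trans_zero v hv2 hsp)

theorem edge_right (c : ℕ → Finset (PyrV q b)) (hc0 : c 0 = ∅)
    (hstep : ∀ t, WeakStep (PyrE q b) (c t) (c (t + 1)))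
    (v : PyrV q b) (hv3 : 3 ≤ v.1.1) (hv2 : 2 ≤ v.1.1) (T : ℕ)
    (h1 : v ∉ c T) (h2 : v ∈ c (T + 1)) :
    rho c (q - 1) v T ≤ rho c (q - 1) (pk v hv2 (q - 1)) (rst c (pk v hv2 (q - 1)) T) := by
  have hp0T : pk v hv2 (q - 1) ∈ c T := placed_preds (hstep T) h2 h1 _ (pk_edge v hv2 (q - 1))
  have hplaced := rst_placed c hc0 hp0T
  have hpreds0 := placed_preds (hstep (rst c (pk v hv2 (q - 1)) T)) hplaced.2 hplaced.1
  have hemp := rho_spec c hc0 (q - 1) v T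
  have hle : rho c (q - 1) v T ≤ rst c (pk v hv2 (q - 1)) T := by
    apply le_rst c (rho_le c (q - 1) v T)
    intro hmem
    exact hemp _ hmem (spath_pk_right v hv2)
  have hp0lvl : 2 ≤ (pk v hv2 (q - 1)).1.1 := by
    have h : (pk v hv2 (q - 1)).1.1 = v.1.1 - 1 := rfl
    omega
  have hne : rho c (q - 1) v T ≠ rst c (pk v hv2 (q - 1)) T := by
    intro heq
    have hw0 : pk (pk v hv2 (q - 1)) hp0lvl (q - 1) ∈ c (rst c (pk v hv2 (q - 1)) T) :=
      hpreds0 _ (pk_edge (pk v hv2 (q - 1)) hp0lvl (q - 1))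
    rw [← heq] at hw0
    exact hemp _ hw0 (spath_deep_right v hv3 hv2 hp0lvl)
  apply le_rho c (le_of_lt (lt_of_le_of_ne hle hne))
  intro w hw hsp
  exact hemp w hw (spath_trans_right v hv2 hsp)

theorem main_lemma (c : ℕ → Finset (PyrV q b)) (hq : 2 ≤ q) (hc0 : c 0 = ∅)
    (hstep : ∀ t, WeakStep (PyrE q b) (c t) (c (t + 1))) :
    ∀ j, 2 ≤ j → ∀ v : PyrV q b, v.1.1 = j → ∀ T, v ∉ c T → v ∈ c (T + 1) →
    ∃ m A, rho c 0 v T < m ∧ rho c (q - 1) v T < m ∧ m ≤ T ∧ A ⊆ c m ∧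
      (∀ w ∈ A, Below v w) ∧ (q - 1) * (j - 1) ≤ A.card := by
  intro j hj
  induction j, hj using Nat.le_induction with
  | base =>
    intro v hvj T h1 h2
    have hv2 : 2 ≤ v.1.1 := by omega
    refine ⟨T, (Finset.range q).image (fun k => pk v hv2 k), ?_, ?_, le_refl T, ?_, ?_, ?_⟩
    · have hp0T : pk v hv2 0 ∈ c T := placed_preds (hstep T) h2 h1 _ (pk_edge v hv2 0)
      rcases lt_or_eq_of_le (rho_le c 0 v T) with h | h
      · exact h
      · refine absurd (spath_pk_zero v hv2) (rho_spec c hc0 0 v T _ ?_)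
        rw [h]; exact hp0T
    · have hp0T : pk v hv2 (q - 1) ∈ c T :=
        placed_preds (hstep T) h2 h1 _ (pk_edge v hv2 (q - 1))
      rcases lt_or_eq_of_le (rho_le c (q - 1) v T) with h | h
      · exact h
      · refine absurd (spath_pk_right v hv2) (rho_spec c hc0 (q - 1) v T _ ?_)
        rw [h]; exact hp0T
    · intro w hw
      simp only [Finset.mem_image, Finset.mem_range] at hw
      obtain ⟨k, hk, rfl⟩ := hw
      exact placed_preds (hstep T) h2 h1 _ (pk_edge v hv2 k)
    · intro w hw
      simp only [Finset.mem_image, Finset.mem_range] at hw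
      obtain ⟨k, hk, rfl⟩ := hw
      exact below_pk v hv2 (by omega)
    · have hcard : ((Finset.range q).image (fun k => pk v hv2 k)).card = q := by
        rw [Finset.card_image_of_injOn, Finset.card_range]
        intro a ha a' ha' hab
        have ha2 : a ≤ q - 1 := by have := Finset.mem_range.1 ha; omega
        have ha2' : a' ≤ q - 1 := by have := Finset.mem_range.1 ha'; omega
        have hcols := congrArg (fun z : PyrV q b => z.1.2) hab
        simp only [pk_col v hv2 ha2, pk_col v hv2 ha2'] at hcols
        omega
      omega
  | succ j hj ih =>
    intro v hvj T h1 h2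
    have hv2 : 2 ≤ v.1.1 := by omega
    have hv3 : 3 ≤ v.1.1 := by omega
    classical
    obtain ⟨ks, hksmem, hksmax⟩ := Finset.exists_max_image (Finset.range q)
      (fun k => max (rho c 0 (pk v hv2 k) (rst c (pk v hv2 k) T))
        (rho c (q - 1) (pk v hv2 k) (rst c (pk v hv2 k) T)))
      ⟨0, Finset.mem_range.2 (by omega)⟩
    have hks : ks ≤ q - 1 := by have := Finset.mem_range.1 hksmem; omega
    have hpksT : pk v hv2 ks ∈ c T := placed_preds (hstep T) h2 h1 _ (pk_edge v hv2 ks)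
    have hplaced := rst_placed c hc0 hpksT
    have hsksT : rst c (pk v hv2 ks) T < T := rst_lt c hc0 hpksT
    have hklvl : (pk v hv2 ks).1.1 = j := by
      have h : (pk v hv2 ks).1.1 = v.1.1 - 1 := rfl
      omega
    obtain ⟨m, A, hm0, hmr, hmle, hAs, hAb, hAc⟩ :=
      ih (pk v hv2 ks) hklvl (rst c (pk v hv2 ks) T) hplaced.1 hplaced.2
    have hmT : m ≤ T := le_trans hmle (le_of_lt hsksT)
    have hmM : ∀ k ∈ Finset.range q,
        max (rho c 0 (pk v hv2 k) (rst c (pk v hv2 k) T))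
          (rho c (q - 1) (pk v hv2 k) (rst c (pk v hv2 k) T)) < m :=
      fun k hk => lt_of_le_of_lt (hksmax k hk) (max_lt hm0 hmr)
    -- sibling witnesses
    have hwit : ∀ k ∈ (Finset.range q).erase ks, ∃ w, w ∈ c m ∧
        (w = pk v hv2 k ∨ SPath (if k < ks then 0 else q - 1) (pk v hv2 k) w) := by
      intro k hkmem
      have hkne : k ≠ ks := (Finset.mem_erase.1 hkmem).1
      have hkq : k < q := Finset.mem_range.1 (Finset.mem_erase.1 hkmem).2
      have hpkT : pk v hv2 k ∈ c T := placed_preds (hstep T) h2 h1 _ (pk_edge v hv2 k)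
      by_cases hcase : rst c (pk v hv2 k) T < m
      · exact ⟨pk v hv2 k, rst_mem c (pk v hv2 k) T m hcase hmT, Or.inl rfl⟩
      · have hlt : rho c (if k < ks then 0 else q - 1) (pk v hv2 k)
            (rst c (pk v hv2 k) T) < m := by
          refine lt_of_le_of_lt ?_ (hmM k (Finset.mem_range.2 hkq))
          by_cases hc : k < ks
          · rw [if_pos hc]; exact le_max_left _ _
          · rw [if_neg hc]; exact le_max_right _ _
        obtain ⟨w, hw, hsp⟩ := rho_occ c _ (pk v hv2 k) (rst c (pk v hv2 k) T) m hlt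
          (not_lt.1 hcase)
        exact ⟨w, hw, Or.inr hsp⟩
    set S := (Finset.range q).erase ks with hS
    have hkbound : ∀ k ∈ S, k ≤ q - 1 := by
      intro k hk
      have := Finset.mem_range.1 (Finset.mem_erase.1 hk).2
      omega
    set wit : {k // k ∈ S} → PyrV q b := fun k => Classical.choose (hwit k.1 k.2) with hwitdef
    have hwmem : ∀ k : {k // k ∈ S}, wit k ∈ c m :=
      fun k => (Classical.choose_spec (hwit k.1 k.2)).1
    have hwpath : ∀ k : {k // k ∈ S}, (wit k = pk v hv2 k.1 ∨
        SPath (if k.1 < ks then 0 else q - 1) (pk v hv2 k.1) (wit k)) :=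
      fun k => (Classical.choose_spec (hwit k.1 k.2)).2
    set B := Finset.image wit S.attach with hB
    have hinj : Set.InjOn wit S.attach := by
      intro k hk l hl hkl
      by_contra hne
      have hne' : k.1 ≠ l.1 := fun h => hne (Subtype.ext h)
      exact sib_disjoint v hv2 (hkbound k.1 k.2) (hkbound l.1 l.2) hne' hq
        (hkl ▸ hwpath k) (hwpath l)
    have hBcard : B.card = q - 1 := by
      rw [hB, Finset.card_image_of_injOn hinj, Finset.card_attach, hS,
        Finset.card_erase_of_mem hksmem, Finset.card_range]
    have hdisj : Disjoint A B := by
      rw [Finset.disjoint_left]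
      intro w hwA hwB
      obtain ⟨k, -, rfl⟩ := Finset.mem_image.1 hwB
      have hkne : k.1 ≠ ks := (Finset.mem_erase.1 k.2).1
      exact sib_not_below v hv2 (hkbound k.1 k.2) hks hkne (hwpath k) (hAb _ hwA)
    refine ⟨m, A ∪ B, ?_, ?_, hmT, ?_, ?_, ?_⟩
    · have e1 : rho c 0 v T ≤ rho c 0 (pk v hv2 0) (rst c (pk v hv2 0) T) :=
        edge_left c hc0 hstep v hv3 hv2 T h1 h2
      refine lt_of_le_of_lt (le_trans e1 (le_max_left _ _)) (hmM 0 (Finset.mem_range.2 ?_))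
      omega
    · have e1 : rho c (q - 1) v T ≤
          rho c (q - 1) (pk v hv2 (q - 1)) (rst c (pk v hv2 (q - 1)) T) :=
        edge_right c hc0 hstep v hv3 hv2 T h1 h2
      refine lt_of_le_of_lt (le_trans e1 (le_max_right _ _)) (hmM (q - 1) (Finset.mem_range.2 ?_))
      omega
    · intro w hw
      rcases Finset.mem_union.1 hw with h | h
      · exact hAs h
      · obtain ⟨k, -, rfl⟩ := Finset.mem_image.1 h
        exact hwmem k
    · intro w hw
      rcases Finset.mem_union.1 hw with h | h
      · exact below_trans_pk v hv2 hks (hAb _ h)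
      · obtain ⟨k, -, rfl⟩ := Finset.mem_image.1 h
        rcases hwpath k with heq | hsp
        · rw [heq]; exact below_pk v hv2 (hkbound k.1 k.2)
        · refine below_sib v hv2 (hkbound k.1 k.2) ?_ hsp
          by_cases hc : k.1 < ks
          · rw [if_pos hc]; exact Or.inl rfl
          · rw [if_neg hc]; exact Or.inr rfl
    · rw [Finset.card_union_of_disjoint hdisj, hBcard]
      have hmul : (q - 1) * j = (q - 1) * (j - 1) + (q - 1) := by
        have hj1 : j = (j - 1) + 1 := by omega
        calc (q - 1) * j = (q - 1) * ((j - 1) + 1) := by rw [← hj1]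
        _ = (q - 1) * (j - 1) + (q - 1) := Nat.mul_succ _ _
      have : (j + 1 - 1) = j := by omega
      rw [this]
      omega

end MainLemma

section Construction

noncomputable def pyrFintype (q b : ℕ) : Fintype (PyrV q b) := by
  classical
  exact Fintype.subtype
    ((Finset.Icc 1 b ×ˢ Finset.Icc 1 ((q - 1) * (b - 1) + 1)).filter
      (fun p => p.2 ≤ (q - 1) * (b - p.1) + 1))
    (by
      intro x
      simp only [Finset.mem_filter, Finset.mem_product, Finset.mem_Icc]
      constructor
      · rintro ⟨⟨⟨h1, h2⟩, h3, h4⟩, h5⟩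
        exact ⟨h1, h2, h3, h5⟩
      · rintro ⟨h1, h2, h3, h4⟩
        have hmono : (q - 1) * (b - x.1) ≤ (q - 1) * (b - 1) :=
          Nat.mul_le_mul_left _ (by omega)
        exact ⟨⟨⟨h1, h2⟩, h3, by omega⟩, h4⟩)

theorem scanl_head {α β : Type*} (f : β → α → β) (s : β) (l : List α) :
    s ∈ List.scanl f s l := by
  cases l <;> simp [List.scanl]

theorem aux_chain (q b : ℕ) :
    ∀ (l : List (PyrV q b)) (s : Finset (PyrV q b)),
      l.Pairwise (fun u v => u.1.1 ≤ v.1.1) → l.Nodup →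
      (∀ w ∈ l, w ∉ s) →
      (∀ w : PyrV q b, w ∈ s ∨ w ∈ l) →
      List.Chain' (PebbleStep (PyrE q b)) (List.scanl (fun s v => insert v s) s l)
  | [], s, _, _, _, _ => by simp [List.scanl_nil, List.Chain', List.isChain_singleton]
  | v :: t, s, hpair, hnodup, hdis, hcov => by
    rw [List.scanl_cons]; unfold List.Chain'; rw [List.isChain_cons]
    constructor
    · intro x hx
      have hx' : x = insert v s := by
        cases t <;> simp [List.scanl_nil, List.scanl_cons] at hx <;> exact hx.symm
      subst hx'
      refine Or.inl ⟨v, hdis v List.mem_cons_self, ?_, rfl⟩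
      intro u hu
      rcases hcov u with hus | hul
      · exact hus
      · exfalso
        rcases List.mem_cons.1 hul with rfl | hut
        · have : u.1.1 = u.1.1 + 1 := hu.1
          omega
        · have hle : v.1.1 ≤ u.1.1 := (List.pairwise_cons.1 hpair).1 u hut
          have : v.1.1 = u.1.1 + 1 := hu.1
          omega
    · apply aux_chain q b t (insert v s) (List.pairwise_cons.1 hpair).2
        (List.nodup_cons.1 hnodup).2
      · intro w hw
        rw [Finset.mem_insert]
        push_neg
        exact ⟨fun h => (List.nodup_cons.1 hnodup).1 (h ▸ hw), hdis w (List.mem_cons_of_mem _ hw)⟩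
      · intro w
        rcases hcov w with hws | hwl
        · exact Or.inl (Finset.mem_insert_of_mem hws)
        · rcases List.mem_cons.1 hwl with rfl | hwt
          · exact Or.inl (Finset.mem_insert_self _ _)
          · exact Or.inr hwt

theorem aux_mem (q b : ℕ) :
    ∀ (l : List (PyrV q b)) (s : Finset (PyrV q b)) (v : PyrV q b), v ∈ l →
      ∃ A ∈ List.scanl (fun s v => insert v s) s l, v ∈ A
  | [], _, v, hv => absurd hv List.not_mem_nil
  | w :: t, s, v, hv => by
    rw [List.scanl_cons]
    rcases List.mem_cons.1 hv with rfl | hv'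
    · exact ⟨insert v s, List.mem_cons_of_mem _ (scanl_head _ _ _), Finset.mem_insert_self _ _⟩
    · obtain ⟨A, hA, hvA⟩ := aux_mem q b t (insert w s) v hv'
      exact ⟨A, List.mem_cons_of_mem _ hA, hvA⟩

theorem exists_pebbling (q b : ℕ) : ∃ φ : List (Finset (PyrV q b)), IsPebbling (PyrE q b) φ := by
  classical
  letI : Fintype (PyrV q b) := pyrFintype q b
  set l := (Finset.univ.toList (α := PyrV q b)).mergeSort
    (fun u v => decide (u.1.1 ≤ v.1.1)) with hl
  have hpair : l.Pairwise (fun u v : PyrV q b => u.1.1 ≤ v.1.1) := by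
    have hs := List.pairwise_mergeSort
      (le := fun u v : PyrV q b => decide (u.1.1 ≤ v.1.1))
      (by intro a b c hab hbc; simp only [decide_eq_true_eq] at *; omega)
      (by intro a b; simp only [Bool.or_eq_true, decide_eq_true_eq]; omega)
      (Finset.univ.toList (α := PyrV q b))
    rw [← hl] at hs
    exact hs.imp (by intro a b h; simpa using h)
  have hnodup : l.Nodup :=
    (List.mergeSort_perm (Finset.univ.toList (α := PyrV q b)) _).symm.nodup
      (Finset.nodup_toList _)
  have hmem : ∀ v : PyrV q b, v ∈ l := by
    intro v
    rw [hl, List.mem_mergeSort]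
    exact Finset.mem_toList.2 (Finset.mem_univ v)
  refine ⟨List.scanl (fun s v => insert v s) ∅ l, ?_, ?_, ?_⟩
  · cases l <;> simp [List.head?_scanl]
  · exact aux_chain q b l ∅ hpair hnodup (fun w _ => Finset.notMem_empty w)
      (fun w => Or.inr (hmem w))
  · intro v
    exact aux_mem q b l ∅ v (hmem v)

end Construction

end Stmt5Aux

theorem stmt_5 (q b : ℕ) (hq : 1 ≤ q) :
    (q - 1) * (b - 1) ≤ pebblingNumber (PyrE q b) := by
  by_cases htriv : (q - 1) * (b - 1) = 0
  · rw [htriv]; exact Nat.zero_le _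
  have hfac : q - 1 ≠ 0 ∧ b - 1 ≠ 0 := by
    constructor <;> intro h <;> rw [h] at htriv <;> simp at htriv
  have hq2 : 2 ≤ q := by omega
  have hb2 : 2 ≤ b := by omega
  rw [pebblingNumber]
  apply le_csInf
  · obtain ⟨φ, hφ⟩ := Stmt5Aux.exists_pebbling q b
    exact ⟨maxPebbles φ, φ, hφ, le_refl _⟩
  · rintro m ⟨φ, hφ, hmax⟩
    classical
    have hne : φ ≠ [] := by
      intro h
      rw [h] at hφ
      simp [IsPebbling] at hφ
    set c := Stmt5Aux.cfg φ with hc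
    have hc0 : c 0 = ∅ := Stmt5Aux.cfg_zero hφ
    have hstep : ∀ t, Stmt5Aux.WeakStep (PyrE q b) (c t) (c (t + 1)) :=
      fun t => Stmt5Aux.cfg_step hφ.2.1 hne t
    set apex : PyrV q b := ⟨(b, 1), by exact ⟨by omega, le_refl b, le_refl 1, by simp⟩⟩ with ha
    obtain ⟨s, hsφ, hvs⟩ := hφ.2.2 apex
    obtain ⟨t, ht⟩ := Stmt5Aux.cfg_complete hsφ hvs
    have hex : ∃ t, apex ∈ c t := ⟨t, ht⟩
    have ht0 : apex ∈ c (Nat.find hex) := Nat.find_spec hex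
    have ht0pos : Nat.find hex ≠ 0 := by
      intro h
      rw [h, hc0] at ht0
      exact absurd ht0 (Finset.notMem_empty _)
    have hT : apex ∉ c (Nat.find hex - 1) := Nat.find_min hex (by omega)
    have hT1 : apex ∈ c (Nat.find hex - 1 + 1) := by
      have heq : Nat.find hex - 1 + 1 = Nat.find hex := by omega
      rw [heq]; exact ht0
    obtain ⟨m', A, -, -, -, hAs, -, hAcard⟩ :=
      Stmt5Aux.main_lemma c hq2 hc0 hstep b hb2 apex rfl (Nat.find hex - 1) hT hT1
    calc (q - 1) * (b - 1) ≤ A.card := hAcard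
      _ ≤ (c m').card := Finset.card_le_card hAs
      _ ≤ maxPebbles φ := Stmt5Aux.cfg_card hne m'
      _ ≤ m := hmax
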